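/- If for every z ∈ Z_Λ the operator R_z is injective and ran(G_z) ∩ ran(R_z) = {0}, then for every z ∈ Z_Λ the operator R^Λ_z is injective and has dense range. -/

import Mathlib

open ContinuousLinearMap

variable {H 𝔥 : Type*}
  [NormedAddCommGroup H] [InnerProductSpace ℂ H] [CompleteSpace H]
  [NormedAddCommGroup 𝔥] [InnerProductSpace ℂ 𝔥] [CompleteSpace 𝔥]

/-- `G_z := (T_{z̄})*`. -/
noncomputable def G (T : ℂ → H →L[ℂ] 𝔥) (z : ℂ) : 𝔥 →L[ℂ] H :=
  adjoint (T ((starRingEnd ℂ) z))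

/-- `R^Λ_z := R_z + G_z ∘ Λ_z ∘ (G_{z̄})*`, where `(G_{z̄})* = T_z`. -/
noncomputable def RLam (R : ℂ → H →L[ℂ] H) (T : ℂ → H →L[ℂ] 𝔥)
    (Λ : ℂ → 𝔥 →L[ℂ] 𝔥) (z : ℂ) : H →L[ℂ] H :=
  R z + G T z ∘L Λ z ∘L T z

/-- Injectivity/dense-range step in the proof of Theorem 2.4 of the paper: if each `R_z`
is injective and `ran(G_z) ∩ ran(R_z) = {0}` for `z ∈ Z_Λ`, then each `R^Λ_z` is injective
with dense range. -/
theorem statement2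
    (Z : Set ℂ) (hZne : Z.Nonempty) (hZconj : ∀ z ∈ Z, (starRingEnd ℂ) z ∈ Z)
    (R : ℂ → H →L[ℂ] H)
    (hRres : ∀ z ∈ Z, ∀ w ∈ Z, R z - R w = (w - z) • (R w ∘L R z))
    (hRadj : ∀ z ∈ Z, adjoint (R z) = R ((starRingEnd ℂ) z))
    (T : ℂ → H →L[ℂ] 𝔥)
    (hT : ∀ z ∈ Z, ∀ w ∈ Z, T z - T w = (w - z) • (T w ∘L R z))
    (ZΛ : Set ℂ) (hZΛsub : ZΛ ⊆ Z) (hZΛne : ZΛ.Nonempty)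
    (hZΛconj : ∀ z ∈ ZΛ, (starRingEnd ℂ) z ∈ ZΛ)
    (Λ : ℂ → 𝔥 →L[ℂ] 𝔥)
    (hΛadj : ∀ z ∈ ZΛ, adjoint (Λ z) = Λ ((starRingEnd ℂ) z))
    (hΛres : ∀ z ∈ ZΛ, ∀ w ∈ ZΛ,
      Λ w - Λ z
        = (z - w) • (Λ w ∘L adjoint (G T ((starRingEnd ℂ) w)) ∘L G T z ∘L Λ z))
    (hRinj : ∀ z ∈ ZΛ, Function.Injective (R z))
    (hdisj : ∀ z ∈ ZΛ, Set.range (G T z) ∩ Set.range (R z) = {0}) :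
    ∀ z ∈ ZΛ,
      Function.Injective (RLam R T Λ z) ∧ Dense (Set.range (RLam R T Λ z)) := by
  -- injectivity for arbitrary z ∈ ZΛ
  have hinj : ∀ z ∈ ZΛ, Function.Injective (RLam R T Λ z) := by
    intro z hz
    rw [injective_iff_map_eq_zero]
    intro x hx
    have hx' : R z x + G T z (Λ z (T z x)) = 0 := by
      simpa [RLam, ContinuousLinearMap.add_apply, ContinuousLinearMap.comp_apply] using hx
    have hmem : G T z (Λ z (T z x)) ∈ Set.range (G T z) ∩ Set.range (R z) := by
      constructor
      · exact ⟨_, rfl⟩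
      · refine ⟨-x, ?_⟩
        rw [map_neg]
        linear_combination (norm := abel) -hx'
    have h0 : G T z (Λ z (T z x)) = 0 := by
      have := hdisj z hz ▸ hmem
      simpa using this
    have hRx : R z x = 0 := by
      rw [h0, add_zero] at hx'
      exact hx'
    have := hRinj z hz (by simpa using hRx : R z x = R z 0)
    simpa using this
  -- adjoint identity
  have hadj : ∀ z ∈ ZΛ, adjoint (RLam R T Λ z) = RLam R T Λ ((starRingEnd ℂ) z) := by
    intro z hz
    have hzZ : z ∈ Z := hZΛsub hz
    have hGadj : adjoint (G T z) = T ((starRingEnd ℂ) z) := by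
      simp [G, adjoint_adjoint]
    have hTadj : adjoint (T z) = G T ((starRingEnd ℂ) z) := by
      simp [G]
    rw [RLam, map_add, adjoint_comp, adjoint_comp, hRadj z hzZ, hGadj, hTadj,
      hΛadj z hz, RLam]
    rw [ContinuousLinearMap.comp_assoc]
  intro z hz
  refine ⟨hinj z hz, ?_⟩
  have hzc : (starRingEnd ℂ) z ∈ ZΛ := hZΛconj z hz
  -- prove density via orthogonal complement
  have hrange : Dense ((LinearMap.range ((RLam R T Λ z : H →L[ℂ] H) : H →ₗ[ℂ] H) : Submodule ℂ H) : Set H) := by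
    rw [Submodule.dense_iff_topologicalClosure_eq_top,
      Submodule.topologicalClosure_eq_top_iff]
    rw [Submodule.eq_bot_iff]
    intro x hx
    have hAx : RLam R T Λ ((starRingEnd ℂ) z) x = 0 := by
      rw [← hadj z hz]
      have : ∀ y : H, (inner ℂ y (adjoint (RLam R T Λ z) x) : ℂ) = 0 := by
        intro y
        rw [adjoint_inner_right]
        exact (Submodule.mem_orthogonal _ x).mp hx _ ⟨y, rfl⟩
      exact ext_inner_left ℂ (fun y => by rw [this y, inner_zero_right])
    have := hinj _ hzc (by simpa using hAx : RLam R T Λ ((starRingEnd ℂ) z) x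
      = RLam R T Λ ((starRingEnd ℂ) z) 0)
    simpa using this
  rwa [LinearMap.coe_range] at hrange
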